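/- Let P, M₁,…,Mₙ, N₁,…,Nₙ be real 2n×2n matrices and m > 0, and suppose there exist symmetric matrices X₁,…,Xₙ and W with Sym(W·P) ⪰ m·I + Σᵢ Xᵢ, and for each i and each l ∈ {1,…,4}, Xᵢ ⪰ Sym(δᵢ(-K₁ₗ W Mᵢ - K₂ₗ W Nᵢ)) and Xᵢ ⪰ Sym(δᵢ(K₁ₗ W Mᵢ - K₂ₗ W Nᵢ)), where K is the fixed 2×4 matrix. Then for all (a₁,b₁),…,(aₙ,bₙ) with aᵢ² + bᵢ² ≤ δᵢ², we have Sym(W·P) + Σᵢ Sym(W(aᵢMᵢ + bᵢNᵢ)) ⪰ m·I. -/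

import Mathlib

set_option maxHeartbeats 1000000

open Matrix

/-- The fixed 2×4 matrix `K` from the paper. -/
noncomputable def Kmat : Matrix (Fin 2) (Fin 4) ℝ :=
  !![1 - Real.sqrt 2, -1, -1, 1 - Real.sqrt 2;
     1, Real.sqrt 2 - 1, 1 - Real.sqrt 2, -1]

/-- Symmetrization of a square matrix: `Sym(A) = (A + Aᵀ)/2`. -/
noncomputable def symPart {k : ℕ} (A : Matrix (Fin k) (Fin k) ℝ) : Matrix (Fin k) (Fin k) ℝ :=
  (1 / 2 : ℝ) • (A + Aᵀ)

lemma symPart_comb {k : ℕ} (δ c d : ℝ) (A B : Matrix (Fin k) (Fin k) ℝ) :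
    symPart (δ • (c • A - d • B)) = δ • (c • symPart A - d • symPart B) := by
  simp only [symPart, transpose_smul, transpose_sub, transpose_add]
  module

lemma symPart_comb2 {k : ℕ} (a b : ℝ) (A B : Matrix (Fin k) (Fin k) ℝ) :
    symPart (a • A + b • B) = a • symPart A + b • symPart B := by
  simp only [symPart, transpose_smul, transpose_add]
  module

lemma symPart_isSymm {k : ℕ} (A : Matrix (Fin k) (Fin k) ℝ) : (symPart A).IsSymm := by
  simp only [symPart, Matrix.IsSymm, transpose_smul, transpose_add, transpose_transpose]
  rw [add_comm]

lemma isHermitian_of_isSymm {k : ℕ} (A : Matrix (Fin k) (Fin k) ℝ) (h : A.IsSymm) :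
    A.IsHermitian := by
  rwa [Matrix.IsHermitian, conjTranspose, Matrix.IsSymm] at *

lemma scalar_key (a b δ q s t : ℝ) (hab : a^2 + b^2 ≤ δ^2) (hδ : 0 < δ)
    (H : ∀ c d : ℝ, ((c = 1 ∨ c = -1) ∧ (d = Real.sqrt 2 - 1 ∨ d = -(Real.sqrt 2 - 1))) ∨
      ((c = Real.sqrt 2 - 1 ∨ c = -(Real.sqrt 2 - 1)) ∧ (d = 1 ∨ d = -1)) →
      δ * (c * s + d * t) ≤ q) :
    0 ≤ q + (a * s + b * t) := by
  have h2 : Real.sqrt 2 ^ 2 = 2 := Real.sq_sqrt (by norm_num)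
  have h1 : 1 ≤ Real.sqrt 2 := by nlinarith [Real.sqrt_nonneg 2]
  have hr0 : 0 ≤ Real.sqrt 2 - 1 := by linarith
  set u : ℝ := Real.sqrt (s^2 + t^2) with hu
  have hu0 : 0 ≤ u := Real.sqrt_nonneg _
  have hu2 : u^2 = s^2 + t^2 := Real.sq_sqrt (by positivity)
  have hcs : -(a*s + b*t) ≤ δ * u := by
    have hle : (a*s + b*t)^2 ≤ δ^2 * u^2 := by
      nlinarith [sq_nonneg (a*t - b*s),
        mul_nonneg (sub_nonneg.2 hab) (add_nonneg (sq_nonneg s) (sq_nonneg t))]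
    have h3 : 0 ≤ δ * u := mul_nonneg hδ.le hu0
    nlinarith [hle, h3]
  have hv : ∃ c d : ℝ, (((c = 1 ∨ c = -1) ∧ (d = Real.sqrt 2 - 1 ∨ d = -(Real.sqrt 2 - 1))) ∨
      ((c = Real.sqrt 2 - 1 ∨ c = -(Real.sqrt 2 - 1)) ∧ (d = 1 ∨ d = -1))) ∧ u ≤ c * s + d * t := by
    have key : ∀ s' t' : ℝ, |t'| ≤ |s'| →
        Real.sqrt (s'^2 + t'^2) ≤ |s'| + (Real.sqrt 2 - 1) * |t'| := by
      intro s' t' h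
      have hle : s'^2 + t'^2 ≤ (|s'| + (Real.sqrt 2 - 1) * |t'|)^2 := by
        nlinarith [abs_nonneg s', abs_nonneg t', sq_abs s', sq_abs t',
          mul_le_mul_of_nonneg_left h (mul_nonneg hr0 (abs_nonneg t'))]
      calc Real.sqrt (s'^2 + t'^2) ≤ Real.sqrt ((|s'| + (Real.sqrt 2 - 1)*|t'|)^2) :=
            Real.sqrt_le_sqrt hle
        _ = |s'| + (Real.sqrt 2 - 1)*|t'| := Real.sqrt_sq (by positivity)
    rcases le_total (|t|) (|s|) with h | h
    · have := key s t h
      rcases le_or_gt 0 s with hs | hs <;> rcases le_or_gt 0 t with ht | ht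
      · exact ⟨1, Real.sqrt 2 - 1, by tauto, by rw [abs_of_nonneg hs, abs_of_nonneg ht] at this; linarith⟩
      · exact ⟨1, -(Real.sqrt 2 - 1), by tauto, by rw [abs_of_nonneg hs, abs_of_neg ht] at this; linarith⟩
      · exact ⟨-1, Real.sqrt 2 - 1, by tauto, by rw [abs_of_neg hs, abs_of_nonneg ht] at this; linarith⟩
      · exact ⟨-1, -(Real.sqrt 2 - 1), by tauto, by rw [abs_of_neg hs, abs_of_neg ht] at this; linarith⟩
    · have := key t s h
      have hcomm : u = Real.sqrt (t^2 + s^2) := by rw [hu]; ring_nf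
      rw [← hcomm] at this
      rcases le_or_gt 0 s with hs | hs <;> rcases le_or_gt 0 t with ht | ht
      · exact ⟨Real.sqrt 2 - 1, 1, by tauto, by rw [abs_of_nonneg hs, abs_of_nonneg ht] at this; linarith⟩
      · exact ⟨Real.sqrt 2 - 1, -1, by tauto, by rw [abs_of_nonneg hs, abs_of_neg ht] at this; linarith⟩
      · exact ⟨-(Real.sqrt 2 - 1), 1, by tauto, by rw [abs_of_neg hs, abs_of_nonneg ht] at this; linarith⟩
      · exact ⟨-(Real.sqrt 2 - 1), -1, by tauto, by rw [abs_of_neg hs, abs_of_neg ht] at this; linarith⟩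
  obtain ⟨c, d, hmem, hcd⟩ := hv
  have hq := H c d hmem
  nlinarith [mul_le_mul_of_nonneg_left hcd (le_of_lt hδ)]

/-- Abstract form of Theorem 4: the LMI certificate `(W, X₁, …, Xₙ)` guarantees
that the monotonicity LMI `Sym(W P) + Σᵢ Sym(W(aᵢMᵢ + bᵢNᵢ)) ⪰ m I` holds for all
perturbations with `aᵢ² + bᵢ² ≤ δᵢ²`. -/
theorem certificate_implies_monotonicity_LMI {n : ℕ}
    (P W : Matrix (Fin (2 * n)) (Fin (2 * n)) ℝ)
    (M N : Fin n → Matrix (Fin (2 * n)) (Fin (2 * n)) ℝ)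
    (X : Fin n → Matrix (Fin (2 * n)) (Fin (2 * n)) ℝ)
    (δ : Fin n → ℝ) (hδ : ∀ i, 0 < δ i)
    (m : ℝ) (hm : 0 < m)
    (hXsymm : ∀ i, (X i).IsSymm)
    (hW : (symPart (W * P) -
      (m • (1 : Matrix (Fin (2 * n)) (Fin (2 * n)) ℝ) + ∑ i, X i)).PosSemidef)
    (h1 : ∀ i, ∀ l : Fin 4,
      (X i - symPart (δ i • ((-Kmat 0 l) • (W * M i) - Kmat 1 l • (W * N i)))).PosSemidef)
    (h2 : ∀ i, ∀ l : Fin 4,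
      (X i - symPart (δ i • (Kmat 0 l • (W * M i) - Kmat 1 l • (W * N i)))).PosSemidef) :
    ∀ a b : Fin n → ℝ, (∀ i, (a i) ^ 2 + (b i) ^ 2 ≤ (δ i) ^ 2) →
      (symPart (W * P) + ∑ i, symPart (W * (a i • M i + b i • N i)) -
        m • (1 : Matrix (Fin (2 * n)) (Fin (2 * n)) ℝ)).PosSemidef := by
  intro a b hab
  -- Kmat entries
  have e00 : Kmat 0 0 = 1 - Real.sqrt 2 := by simp [Kmat]
  have e01 : Kmat 0 1 = -1 := by simp [Kmat]
  have e02 : Kmat 0 2 = -1 := by simp [Kmat]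
  have e03 : Kmat 0 3 = 1 - Real.sqrt 2 := by simp [Kmat]
  have e10 : Kmat 1 0 = 1 := by simp [Kmat]
  have e11 : Kmat 1 1 = Real.sqrt 2 - 1 := by simp [Kmat]
  have e12 : Kmat 1 2 = 1 - Real.sqrt 2 := by simp [Kmat]
  have e13 : Kmat 1 3 = -1 := by simp [Kmat]
  -- each perturbation term compensated by X i is PSD
  have key : ∀ i, (X i + symPart (W * (a i • M i + b i • N i))).PosSemidef := by
    intro i
    have hM : symPart (W * (a i • M i + b i • N i))
        = a i • symPart (W * M i) + b i • symPart (W * N i) := by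
      rw [mul_add, Matrix.mul_smul, Matrix.mul_smul, symPart_comb2]
    rw [hM]
    refine Matrix.PosSemidef.of_dotProduct_mulVec_nonneg ?_ ?_
    · exact isHermitian_of_isSymm _
        (((hXsymm i).add (((symPart_isSymm (W * M i)).smul (a i)).add
          ((symPart_isSymm (W * N i)).smul (b i)))))
    · intro x
      have quad : ∀ c d : ℝ,
          (X i - δ i • (c • symPart (W * M i) - d • symPart (W * N i))).PosSemidef →
          δ i * (c * (x ⬝ᵥ (symPart (W * M i) *ᵥ x)) - d * (x ⬝ᵥ (symPart (W * N i) *ᵥ x)))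
            ≤ x ⬝ᵥ (X i *ᵥ x) := by
        intro c d h
        have := h.dotProduct_mulVec_nonneg x
        simp only [star_trivial, sub_mulVec, smul_mulVec, dotProduct_sub,
          dotProduct_smul, smul_eq_mul] at this
        linarith
      have H : ∀ c d : ℝ,
          ((c = 1 ∨ c = -1) ∧ (d = Real.sqrt 2 - 1 ∨ d = -(Real.sqrt 2 - 1))) ∨
          ((c = Real.sqrt 2 - 1 ∨ c = -(Real.sqrt 2 - 1)) ∧ (d = 1 ∨ d = -1)) →
          δ i * (c * (x ⬝ᵥ (symPart (W * M i) *ᵥ x)) + d * (x ⬝ᵥ (symPart (W * N i) *ᵥ x)))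
            ≤ x ⬝ᵥ (X i *ᵥ x) := by
        have q10 := h1 i 0; have q11 := h1 i 1; have q12 := h1 i 2; have q13 := h1 i 3
        have q20 := h2 i 0; have q21 := h2 i 1; have q22 := h2 i 2; have q23 := h2 i 3
        rw [symPart_comb] at q10 q11 q12 q13 q20 q21 q22 q23
        rw [e00, e10] at q10 q20
        rw [e01, e11] at q11 q21
        rw [e02, e12] at q12 q22
        rw [e03, e13] at q13 q23
        have t10 := quad _ _ q10; have t11 := quad _ _ q11
        have t12 := quad _ _ q12; have t13 := quad _ _ q13
        have t20 := quad _ _ q20; have t21 := quad _ _ q21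
        have t22 := quad _ _ q22; have t23 := quad _ _ q23
        rintro c d (⟨hc | hc, hd | hd⟩ | ⟨hc | hc, hd | hd⟩) <;> subst hc <;> subst hd <;>
          nlinarith [t10, t11, t12, t13, t20, t21, t22, t23, hδ i]
      have := scalar_key (a i) (b i) (δ i) (x ⬝ᵥ (X i *ᵥ x))
        (x ⬝ᵥ (symPart (W * M i) *ᵥ x)) (x ⬝ᵥ (symPart (W * N i) *ᵥ x))
        (hab i) (hδ i) H
      simp only [star_trivial, add_mulVec, smul_mulVec, dotProduct_add,
        dotProduct_smul, smul_eq_mul]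
      linarith
  have hsum : (∑ i, (X i + symPart (W * (a i • M i + b i • N i)))).PosSemidef := by
    classical
    exact Finset.sum_induction _ _ (fun A B hA hB => hA.add hB) Matrix.PosSemidef.zero
      (fun i _ => key i)
  have hdecomp : symPart (W * P) + ∑ i, symPart (W * (a i • M i + b i • N i)) -
        m • (1 : Matrix (Fin (2 * n)) (Fin (2 * n)) ℝ)
      = (symPart (W * P) - (m • (1 : Matrix (Fin (2 * n)) (Fin (2 * n)) ℝ) + ∑ i, X i))
        + ∑ i, (X i + symPart (W * (a i • M i + b i • N i))) := by
    rw [Finset.sum_add_distrib]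
    abel
  rw [hdecomp]
  exact hW.add hsum
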